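/- Let A be an m×n real matrix, B an m×p real matrix, b ∈ ℝ^m and c ∈ ℝ^n. Let S ⊆ ℝ^p be a set of parameters such that for every y ∈ S the feasible set {x ∈ ℝ^n : A x ≤ b + B y} is nonempty and the infimum J(y) := inf { ⟨c, x⟩ : A x ≤ b + B y } is finite and attained. Then there exists a nonempty finite family F of pairs (α, β) ∈ ℝ^p × ℝ such that for every y ∈ S, J(y) = max_{(α,β) ∈ F} ( ⟨α, y⟩ + β ). In particular, J is piecewise affine on S. -/

import Mathlib

open Matrix Finset Topology
open scoped InnerProductSpace

section Aux

variable {m : ℕ} {H : Type*} [NormedAddCommGroup H] [InnerProductSpace ℝ H]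

/-- extended linear independence of the subfamily indexed by `s` -/
def IndepOn (v : Fin m → H) (s : Finset (Fin m)) : Prop :=
  ∀ g : Fin m → ℝ, (∀ i ∉ s, g i = 0) → ∑ i, g i • v i = 0 → ∀ i, g i = 0

noncomputable def supp (lam : Fin m → ℝ) : Finset (Fin m) :=
  Finset.univ.filter (fun i => lam i ≠ 0)

lemma mem_supp {lam : Fin m → ℝ} {i : Fin m} : i ∈ supp lam ↔ lam i ≠ 0 := by
  simp [supp]

lemma carath (v : Fin m → H) :
    ∀ k (lam : Fin m → ℝ), (supp lam).card ≤ k → (∀ i, 0 ≤ lam i) →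
    ∃ mu : Fin m → ℝ, (∀ i, 0 ≤ mu i) ∧ (∀ i, lam i = 0 → mu i = 0) ∧
      (∑ i, mu i • v i = ∑ i, lam i • v i) ∧ IndepOn v (supp mu) := by
  intro k
  induction k with
  | zero =>
    intro lam hcard _
    refine ⟨fun _ => 0, by simp, by simp, ?_, ?_⟩
    · have : ∀ i, lam i = 0 := by
        intro i
        by_contra h
        have : i ∈ supp lam := mem_supp.2 h
        have := Finset.card_pos.2 ⟨i, this⟩
        omega
      simp [this]
    · intro g hg _ i
      exact hg i (by simp [mem_supp])
  | succ k ih =>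
    intro lam hcard hlam
    by_cases hind : IndepOn v (supp lam)
    · exact ⟨lam, hlam, fun i h => h, rfl, hind⟩
    · -- get a dependency g supported on supp lam
      simp only [IndepOn, not_forall] at hind
      obtain ⟨g, hgsupp, hgsum, hgne⟩ := hind
      obtain ⟨i₁, hi₁⟩ := hgne
      -- WLOG there is i with 0 < g i
      have key : ∀ g : Fin m → ℝ, (∀ i ∉ supp lam, g i = 0) → ∑ i, g i • v i = 0 →
          (∃ i, 0 < g i) →
          ∃ mu : Fin m → ℝ, (∀ i, 0 ≤ mu i) ∧ (∀ i, lam i = 0 → mu i = 0) ∧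
            (∑ i, mu i • v i = ∑ i, lam i • v i) ∧ IndepOn v (supp mu) := by
        intro g hgsupp hgsum ⟨j, hj⟩
        set P : Finset (Fin m) := Finset.univ.filter (fun i => 0 < g i) with hP
        have hPne : P.Nonempty := ⟨j, by simp [hP, hj]⟩
        set t : ℝ := P.inf' hPne (fun i => lam i / g i) with ht
        obtain ⟨i₀, hi₀P, hi₀⟩ := P.exists_mem_eq_inf' hPne (fun i => lam i / g i)
        have hgi₀ : 0 < g i₀ := by simpa [hP] using hi₀P
        have ht0 : 0 ≤ t := by
          rw [ht]
          apply Finset.le_inf'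
          intro i hi
          have : 0 < g i := by simpa [hP] using hi
          exact div_nonneg (hlam i) this.le
        set lam' : Fin m → ℝ := fun i => lam i - t * g i with hlam'
        have hlam'0 : ∀ i, 0 ≤ lam' i := by
          intro i
          rcases le_or_gt (g i) 0 with h | h
          · have : t * g i ≤ 0 := mul_nonpos_of_nonneg_of_nonpos ht0 h
            simp only [hlam']
            linarith [hlam i]
          · have hiP : i ∈ P := by simp [hP, h]
            have : t ≤ lam i / g i := Finset.inf'_le _ hiP
            have := (le_div_iff₀ h).1 this
            simp only [hlam']; linarith
        have hsub : ∀ i, lam i = 0 → lam' i = 0 := by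
          intro i h
          have : g i = 0 := hgsupp i (by simp [mem_supp, h])
          simp [hlam', h, this]
        have hi₀lam : lam i₀ ≠ 0 := by
          intro h
          have : g i₀ = 0 := hgsupp i₀ (by simp [mem_supp, h])
          simp [this] at hgi₀
        have htval : t = lam i₀ / g i₀ := by rw [ht, hi₀]
        have hi₀lam' : lam' i₀ = 0 := by
          have : lam' i₀ = lam i₀ - t * g i₀ := rfl
          rw [this, htval]
          field_simp
          ring
        have hcard' : (supp lam').card ≤ k := by
          have hsubset : supp lam' ⊆ supp lam := by
            intro i hi
            rw [mem_supp] at hi ⊢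
            intro h
            exact hi (hsub i h)
          have : supp lam' ⊆ (supp lam).erase i₀ := by
            intro i hi
            rw [Finset.mem_erase]
            refine ⟨?_, hsubset hi⟩
            rintro rfl
            exact (mem_supp.1 hi) hi₀lam'
          calc (supp lam').card ≤ ((supp lam).erase i₀).card := Finset.card_le_card this
            _ = (supp lam).card - 1 := Finset.card_erase_of_mem (mem_supp.2 hi₀lam)
            _ ≤ k := by omega
        have hsum' : ∑ i, lam' i • v i = ∑ i, lam i • v i := by
          have : ∀ i, lam' i • v i = lam i • v i - t • (g i • v i) := by
            intro i
            rw [show lam' i = lam i - t * g i from rfl, sub_smul, mul_smul]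
          simp only [this, Finset.sum_sub_distrib, ← Finset.smul_sum, hgsum, smul_zero, sub_zero]
        obtain ⟨mu, h1, h2, h3, h4⟩ := ih lam' hcard' hlam'0
        exact ⟨mu, h1, fun i h => h2 i (hsub i h), h3.trans hsum', h4⟩
      rcases (Ne.lt_or_gt hi₁) with h | h
      · refine key (fun i => -g i) (fun i hi => by simp [hgsupp i hi]) ?_ ⟨i₁, neg_pos.2 h⟩
        simp only [neg_smul, Finset.sum_neg_distrib, hgsum, neg_zero]
      · exact key g hgsupp hgsum ⟨i₁, h⟩


variable [FiniteDimensional ℝ H]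

lemma cone_isClosed (v : Fin m → H) :
    IsClosed {x : H | ∃ lam : Fin m → ℝ, (∀ i, 0 ≤ lam i) ∧ x = ∑ i, lam i • v i} := by
  classical
  have key : {x : H | ∃ lam : Fin m → ℝ, (∀ i, 0 ≤ lam i) ∧ x = ∑ i, lam i • v i} =
      ⋃ (s : Finset (Fin m)) (_ : IndepOn v s),
        {x : H | ∃ lam : Fin m → ℝ, (∀ i, 0 ≤ lam i) ∧ (∀ i ∉ s, lam i = 0) ∧
          x = ∑ i, lam i • v i} := by
    ext x
    simp only [Set.mem_setOf_eq, Set.mem_iUnion]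
    constructor
    · rintro ⟨lam, hlam, rfl⟩
      obtain ⟨mu, h1, h2, h3, h4⟩ := carath v (supp lam).card lam le_rfl hlam
      exact ⟨supp mu, h4, mu, h1, fun i hi => by_contra fun h => hi (mem_supp.2 h), h3.symm⟩
    · rintro ⟨s, _, lam, hlam, _, rfl⟩
      exact ⟨lam, hlam, rfl⟩
  rw [key]
  apply isClosed_iUnion_of_finite
  intro s
  apply isClosed_iUnion_of_finite
  intro hs
  -- the submodule of coefficient vectors supported on s
  set K : Submodule ℝ (Fin m → ℝ) :=
    { carrier := {lam | ∀ i ∉ s, lam i = 0}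
      add_mem' := fun ha hb i hi => by simp [ha i hi, hb i hi]
      zero_mem' := fun i _ => rfl
      smul_mem' := fun c lam h i hi => by simp [h i hi] } with hK
  set f : K →ₗ[ℝ] H :=
    { toFun := fun lam => ∑ i, (lam : Fin m → ℝ) i • v i
      map_add' := fun a b => by
        simp [add_smul, Finset.sum_add_distrib]
      map_smul' := fun c a => by
        simp [mul_smul, ← Finset.smul_sum] } with hf
  have hker : LinearMap.ker f = ⊥ := by
    rw [LinearMap.ker_eq_bot']
    intro lam hlam
    have := hs (lam : Fin m → ℝ) lam.2 hlam
    ext i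
    exact this i
  have hemb : IsClosedEmbedding f := LinearMap.isClosedEmbedding_of_injective hker
  have himg : {x : H | ∃ lam : Fin m → ℝ, (∀ i, 0 ≤ lam i) ∧ (∀ i ∉ s, lam i = 0) ∧
      x = ∑ i, lam i • v i} = f '' {lam : K | ∀ i, 0 ≤ (lam : Fin m → ℝ) i} := by
    ext x
    simp only [Set.mem_setOf_eq, Set.mem_image]
    constructor
    · rintro ⟨lam, h1, h2, rfl⟩
      exact ⟨⟨lam, h2⟩, h1, rfl⟩
    · rintro ⟨lam, h1, rfl⟩
      exact ⟨lam, h1, lam.2, rfl⟩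
  rw [himg]
  apply hemb.isClosedMap
  have : {lam : K | ∀ i, 0 ≤ (lam : Fin m → ℝ) i} =
      ⋂ i, {lam : K | 0 ≤ (lam : Fin m → ℝ) i} := by
    ext lam; simp
  rw [this]
  apply isClosed_iInter
  intro i
  have hc : Continuous fun lam : K => (lam : Fin m → ℝ) i :=
    (continuous_apply i).comp continuous_subtype_val
  exact isClosed_le continuous_const hc

lemma farkas [CompleteSpace H] (v : Fin m → H) (u : H)
    (h : ∀ w : H, (∀ i, 0 ≤ ⟪v i, w⟫_ℝ) → 0 ≤ ⟪u, w⟫_ℝ) :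
    ∃ lam : Fin m → ℝ, (∀ i, 0 ≤ lam i) ∧ ∑ i, lam i • v i = u := by
  classical
  set K : ConvexCone ℝ H :=
    { carrier := {x : H | ∃ lam : Fin m → ℝ, (∀ i, 0 ≤ lam i) ∧ x = ∑ i, lam i • v i}
      smul_mem' := by
        rintro c hc x ⟨lam, hlam, rfl⟩
        exact ⟨fun i => c * lam i, fun i => mul_nonneg hc.le (hlam i), by
          simp [mul_smul, ← Finset.smul_sum]⟩
      add_mem' := by
        rintro x ⟨lam, hlam, rfl⟩ y ⟨mu, hmu, rfl⟩
        exact ⟨fun i => lam i + mu i, fun i => add_nonneg (hlam i) (hmu i), by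
          simp [add_smul, Finset.sum_add_distrib]⟩ } with hKdef
  by_contra hcon
  push_neg at hcon
  have hu : u ∉ K := by
    rintro ⟨lam, hlam, rfl⟩
    exact hcon lam hlam rfl
  have hne : (K : Set H).Nonempty := ⟨0, fun _ => 0, by simp, by simp⟩
  have hcl : IsClosed (K : Set H) := cone_isClosed v
  obtain ⟨w, hw1, hw2⟩ : ∃ w : H, (∀ x ∈ K, 0 ≤ ⟪x, w⟫_ℝ) ∧ ⟪w, u⟫_ℝ < 0 := by
    let C : ProperCone ℝ H :=
      { carrier := (K : Set H)
        add_mem' := fun ha hb => K.add_mem ha hb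
        zero_mem' := ⟨fun _ => 0, fun _ => le_rfl, by simp⟩
        smul_mem' := fun c x hx => by
          rcases c with ⟨c, hc⟩
          rcases hc.eq_or_lt with h | h
          · subst h
            show (0:ℝ) • x ∈ K
            rw [zero_smul]
            exact ⟨fun _ => 0, fun _ => le_rfl, by simp⟩
          · exact K.smul_mem h hx
        isClosed' := hcl }
    obtain ⟨w, hw1, hw2⟩ := ProperCone.hyperplane_separation' C (x₀ := u) hu
    exact ⟨w, fun x hx => hw1 x hx, by rw [real_inner_comm]; exact hw2⟩
  have hvw : ∀ i, 0 ≤ ⟪v i, w⟫_ℝ := by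
    intro i
    apply hw1
    refine ⟨fun j => if j = i then 1 else 0, fun j => by positivity, ?_⟩
    simp [ite_smul]
  have := h w hvw
  rw [real_inner_comm] at hw2
  linarith

lemma kkt [CompleteSpace H] (v : Fin m → H) (c : H) (d : Fin m → ℝ) (x : H)
    (hfeas : ∀ i, ⟪v i, x⟫_ℝ ≤ d i)
    (hopt : ∀ z : H, (∀ i, ⟪v i, z⟫_ℝ ≤ d i) → ⟪c, x⟫_ℝ ≤ ⟪c, z⟫_ℝ) :
    ∃ lam : Fin m → ℝ, (∀ i, 0 ≤ lam i) ∧ (∑ i, lam i • v i = -c) ∧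
      IndepOn v (supp lam) ∧ (∀ i, lam i ≠ 0 → ⟪v i, x⟫_ℝ = d i) := by
  classical
  set I : Finset (Fin m) := Finset.univ.filter (fun i => ⟪v i, x⟫_ℝ = d i) with hI
  set v' : Fin m → H := fun i => if i ∈ I then v i else 0 with hv'
  have hsep : ∀ w : H, (∀ i, 0 ≤ ⟪v' i, w⟫_ℝ) → 0 ≤ ⟪-c, w⟫_ℝ := by
    intro w hw
    rw [inner_neg_left, neg_nonneg]
    by_contra hcw
    push_neg at hcw
    -- pick a small step size t
    set g : Fin m → ℝ := fun i => (d i - ⟪v i, x⟫_ℝ) / (|⟪v i, w⟫_ℝ| + 1) with hg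
    set T : Finset ℝ := insert (1:ℝ) ((Finset.univ.filter (fun i => i ∉ I)).image g) with hT
    have hTne : T.Nonempty := ⟨1, by simp [hT]⟩
    set t : ℝ := T.inf' hTne id with htdef
    have ht0 : 0 < t := by
      rw [htdef]
      refine (Finset.lt_inf'_iff _).2 ?_
      intro r hr
      rw [hT] at hr
      rcases Finset.mem_insert.1 hr with rfl | hr
      · norm_num
      · obtain ⟨i, hi, rfl⟩ := Finset.mem_image.1 hr
        have hiI : i ∉ I := (Finset.mem_filter.1 hi).2
        have : ⟪v i, x⟫_ℝ < d i := lt_of_le_of_ne (hfeas i) (by simpa [hI] using hiI)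
        have hpos : (0:ℝ) < |⟪v i, w⟫_ℝ| + 1 := by positivity
        exact div_pos (by linarith) hpos
    have hfeas' : ∀ i, ⟪v i, x - t • w⟫_ℝ ≤ d i := by
      intro i
      rw [inner_sub_right, real_inner_smul_right]
      by_cases hiI : i ∈ I
      · have hvw : 0 ≤ ⟪v i, w⟫_ℝ := by simpa [hv', hiI] using hw i
        have : ⟪v i, x⟫_ℝ = d i := by simpa [hI] using hiI
        nlinarith
      · have hlt : ⟪v i, x⟫_ℝ < d i := lt_of_le_of_ne (hfeas i) (by simpa [hI] using hiI)
        have htle : t ≤ g i := by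
          rw [htdef]
          exact Finset.inf'_le id (by
            rw [hT]
            exact Finset.mem_insert_of_mem (Finset.mem_image.2 ⟨i, by simp [hiI], rfl⟩))
        have hpos : (0:ℝ) < |⟪v i, w⟫_ℝ| + 1 := by positivity
        have h1 : t * (|⟪v i, w⟫_ℝ| + 1) ≤ d i - ⟪v i, x⟫_ℝ := by
          rw [hg] at htle
          calc t * (|⟪v i, w⟫_ℝ| + 1) ≤ ((d i - ⟪v i, x⟫_ℝ) / (|⟪v i, w⟫_ℝ| + 1)) *
                (|⟪v i, w⟫_ℝ| + 1) := by
                apply mul_le_mul_of_nonneg_right htle hpos.le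
            _ = d i - ⟪v i, x⟫_ℝ := by field_simp
        have h2 : -t * ⟪v i, w⟫_ℝ ≤ t * |⟪v i, w⟫_ℝ| := by
          rw [neg_mul]
          calc -(t * ⟪v i, w⟫_ℝ) ≤ |t * ⟪v i, w⟫_ℝ| := neg_le_abs _
            _ = t * |⟪v i, w⟫_ℝ| := by rw [abs_mul, abs_of_pos ht0]
        nlinarith
    have := hopt (x - t • w) hfeas'
    rw [inner_sub_right, real_inner_smul_right] at this
    nlinarith
  obtain ⟨lam, hlam, hsum⟩ := farkas v' (-c) hsep
  set lam' : Fin m → ℝ := fun i => if i ∈ I then lam i else 0 with hlam'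
  have hsum' : ∑ i, lam' i • v i = -c := by
    rw [← hsum]
    apply Finset.sum_congr rfl
    intro i _
    by_cases hiI : i ∈ I <;> simp [hlam', hv', hiI]
  have hlam'0 : ∀ i, 0 ≤ lam' i := by
    intro i
    by_cases hiI : i ∈ I <;> simp [hlam', hiI, hlam i]
  obtain ⟨mu, h1, h2, h3, h4⟩ := carath v (supp lam').card lam' le_rfl hlam'0
  refine ⟨mu, h1, h3.trans hsum', h4, ?_⟩
  intro i hi
  have : lam' i ≠ 0 := fun h => hi (h2 i h)
  have hiI : i ∈ I := by
    by_contra hiI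
    exact this (by simp [hlam', hiI])
  simpa [hI] using hiI

omit [FiniteDimensional ℝ H] in
lemma lambda_finite (v : Fin m → H) (u : H) :
    {lam : Fin m → ℝ | (∀ i, 0 ≤ lam i) ∧ ∑ i, lam i • v i = u ∧ IndepOn v (supp lam)}.Finite := by
  apply Set.Finite.of_finite_image (f := supp) (Set.toFinite _)
  rintro lam ⟨_, hsum1, hind1⟩ mu ⟨_, hsum2, _⟩ hsupp
  funext i
  have key : ∀ j, lam j - mu j = 0 := by
    apply hind1 (fun j => lam j - mu j)
    · intro j hj
      have h1 : lam j = 0 := by_contra fun h => hj (mem_supp.2 h)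
      have h2 : mu j = 0 := by
        by_contra h
        exact hj (hsupp ▸ mem_supp.2 h)
      simp [h1, h2]
    · simp [sub_smul, Finset.sum_sub_distrib, hsum1, hsum2]
  have := key i
  linarith

end Aux

lemma inner_toE {n : ℕ} (a c : Fin n → ℝ) :
    ⟪((WithLp.equiv 2 (Fin n → ℝ)).symm a : EuclideanSpace ℝ (Fin n)),
      ((WithLp.equiv 2 (Fin n → ℝ)).symm c : EuclideanSpace ℝ (Fin n))⟫_ℝ = a ⬝ᵥ c := by
  simp [PiLp.inner_apply, RCLike.inner_apply, dotProduct]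
  exact Finset.sum_congr rfl fun i _ => mul_comm _ _


theorem stmt_1 (m n p : ℕ) (A : Matrix (Fin m) (Fin n) ℝ) (B : Matrix (Fin m) (Fin p) ℝ)
    (b : Fin m → ℝ) (c : Fin n → ℝ) (S : Set (Fin p → ℝ))
    (J : (Fin p → ℝ) → ℝ)
    (hfeas : ∀ y ∈ S, ∃ x : Fin n → ℝ, ∀ i, A.mulVec x i ≤ b i + B.mulVec y i)
    (hatt : ∀ y ∈ S,
      IsLeast {v : ℝ | ∃ x : Fin n → ℝ,
        (∀ i, A.mulVec x i ≤ b i + B.mulVec y i) ∧ v = c ⬝ᵥ x} (J y)) :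
    ∃ F : Finset ((Fin p → ℝ) × ℝ), ∃ hF : F.Nonempty,
      ∀ y ∈ S, J y = F.sup' hF (fun q => q.1 ⬝ᵥ y + q.2) := by
  classical
  rcases S.eq_empty_or_nonempty with rfl | ⟨y₀, hy₀⟩
  · exact ⟨{(0, 0)}, ⟨(0, 0), by simp⟩, by simp⟩
  set toE : (Fin n → ℝ) → EuclideanSpace ℝ (Fin n) :=
    fun x => (WithLp.equiv 2 (Fin n → ℝ)).symm x with htoE
  set v : Fin m → EuclideanSpace ℝ (Fin n) := fun i => toE (A i) with hv
  set cE : EuclideanSpace ℝ (Fin n) := toE c with hcE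
  have hbridge : ∀ (a x : Fin n → ℝ), ⟪toE a, toE x⟫_ℝ = a ⬝ᵥ x := fun a x => inner_toE a x
  set Λ : Set (Fin m → ℝ) :=
    {lam | (∀ i, 0 ≤ lam i) ∧ ∑ i, lam i • v i = -cE ∧ IndepOn v (supp lam)} with hΛ
  have hfin : Λ.Finite := lambda_finite v (-cE)
  -- weak duality: value of a multiplier vs value of a feasible point
  have hweak : ∀ lam ∈ Λ, ∀ x : Fin n → ℝ,
      c ⬝ᵥ x = -∑ i, lam i * (A.mulVec x i) := by
    rintro lam ⟨_, hsum, _⟩ x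
    have h1 : ⟪∑ i, lam i • v i, toE x⟫_ℝ = -⟪cE, toE x⟫_ℝ := by
      rw [hsum, inner_neg_left]
    rw [sum_inner] at h1
    have h2 : ∀ i, ⟪lam i • v i, toE x⟫_ℝ = lam i * (A.mulVec x i) := by
      intro i
      rw [real_inner_smul_left]
      exact congrArg (lam i * ·) (hbridge (A i) x)
    simp only [h2] at h1
    have h3 : ⟪cE, toE x⟫_ℝ = c ⬝ᵥ x := hbridge c x
    rw [h3] at h1
    linarith
  -- KKT: for every y ∈ S there is a multiplier in Λ attaining the value
  have hkkt : ∀ y ∈ S, ∃ lam ∈ Λ, ∀ x : Fin n → ℝ,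
      (∀ i, A.mulVec x i ≤ b i + B.mulVec y i) → (J y = c ⬝ᵥ x) →
      (∀ i, lam i ≠ 0 → A.mulVec x i = b i + B.mulVec y i) := by
    intro y hy
    obtain ⟨⟨x₀, hx₀f, hx₀v⟩, hlb⟩ := hatt y hy
    have hf' : ∀ i, ⟪v i, toE x₀⟫_ℝ ≤ b i + B.mulVec y i := by
      intro i
      exact le_of_eq_of_le (hbridge (A i) x₀) (hx₀f i)
    have ho' : ∀ z : EuclideanSpace ℝ (Fin n),
        (∀ i, ⟪v i, z⟫_ℝ ≤ b i + B.mulVec y i) → ⟪cE, toE x₀⟫_ℝ ≤ ⟪cE, z⟫_ℝ := by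
      intro z hz
      set x : Fin n → ℝ := WithLp.equiv 2 (Fin n → ℝ) z with hx
      have hzx : toE x = z := by rw [htoE, hx]; exact (WithLp.equiv 2 (Fin n → ℝ)).symm_apply_apply z
      have hxf : ∀ i, A.mulVec x i ≤ b i + B.mulVec y i := by
        intro i
        have := hz i
        rw [← hzx, hv, hbridge (A i) x] at this
        exact this
      have hJx : J y ≤ c ⬝ᵥ x := hlb ⟨x, hxf, rfl⟩
      calc ⟪cE, toE x₀⟫_ℝ = c ⬝ᵥ x₀ := hbridge c x₀
        _ = J y := hx₀v.symm
        _ ≤ c ⬝ᵥ x := hJx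
        _ = ⟪cE, toE x⟫_ℝ := (hbridge c x).symm
        _ = ⟪cE, z⟫_ℝ := by rw [hzx]
    obtain ⟨lam, h1, h2, h3, h4⟩ := kkt v cE (fun i => b i + B.mulVec y i) (toE x₀) hf' ho'
    refine ⟨lam, ⟨h1, h2, h3⟩, ?_⟩
    intro x hxf hxv i hi
    -- complementary slackness transfers to any optimal x: we prove it for x via equality of sums
    -- first, the value identity at x₀
    have hval : ∀ z : Fin n → ℝ, (∀ i, A.mulVec z i ≤ b i + B.mulVec y i) → (J y = c ⬝ᵥ z) →
        ∑ i, lam i * (b i + B.mulVec y i - A.mulVec z i) = 0 := by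
      intro z hzf hzv
      have hw := hweak lam ⟨h1, h2, h3⟩ z
      have hw0 := hweak lam ⟨h1, h2, h3⟩ x₀
      have hslack : ∑ i, lam i * (A.mulVec x₀ i) = ∑ i, lam i * (b i + B.mulVec y i) := by
        apply Finset.sum_congr rfl
        intro i _
        by_cases h : lam i = 0
        · simp [h]
        · have h5 : (A *ᵥ x₀) i = b i + (B *ᵥ y) i := (hbridge (A i) x₀).symm.trans (h4 i h)
          rw [h5]
      have : c ⬝ᵥ z = c ⬝ᵥ x₀ := by rw [← hzv, ← hx₀v]
      have hsum0 : ∑ i, lam i * (A.mulVec z i) = ∑ i, lam i * (b i + B.mulVec y i) := by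
        rw [← hslack]; linarith [hw, hw0, this]
      have : ∑ i, lam i * (b i + B.mulVec y i - A.mulVec z i)
          = ∑ i, lam i * (b i + B.mulVec y i) - ∑ i, lam i * (A.mulVec z i) := by
        rw [← Finset.sum_sub_distrib]
        apply Finset.sum_congr rfl
        intro i _; ring
      rw [this, hsum0, sub_self]
    have hterm := hval x hxf hxv
    -- all terms are nonnegative and sum to zero
    have hnn : ∀ j ∈ Finset.univ, 0 ≤ lam j * (b j + B.mulVec y j - A.mulVec x j) := by
      intro j _
      exact mul_nonneg (h1 j) (by linarith [hxf j])
    have := (Finset.sum_eq_zero_iff_of_nonneg hnn).1 hterm i (Finset.mem_univ i)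
    rcases mul_eq_zero.1 this with h | h
    · exact absurd h hi
    · linarith [hxf i]
  -- the finite family
  set F : Finset ((Fin p → ℝ) × ℝ) :=
    hfin.toFinset.image (fun lam => ((fun j => -∑ i, lam i * B i j), -(lam ⬝ᵥ b))) with hF
  have hvalue : ∀ (lam : Fin m → ℝ) (y : Fin p → ℝ),
      (fun j => -∑ i, lam i * B i j) ⬝ᵥ y + (-(lam ⬝ᵥ b))
        = -∑ i, lam i * (b i + B.mulVec y i) := by
    intro lam y
    have h1 : ∀ j, (-∑ i, lam i * B i j) * y j = ∑ i, -(lam i * (B i j * y j)) := by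
      intro j
      rw [neg_mul, Finset.sum_mul, ← Finset.sum_neg_distrib]
      apply Finset.sum_congr rfl
      intro i _; ring
    have h0 : (fun j => -∑ i, lam i * B i j) ⬝ᵥ y = ∑ j, ∑ i, -(lam i * (B i j * y j)) := by
      simp only [dotProduct]
      exact Finset.sum_congr rfl fun j _ => h1 j
    have h2 : ∑ j, ∑ i, -(lam i * (B i j * y j)) = ∑ i, ∑ j, -(lam i * (B i j * y j)) :=
      Finset.sum_comm
    rw [h0, h2]
    simp only [dotProduct, Matrix.mulVec, mul_add, Finset.mul_sum, Finset.sum_add_distrib,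
      Finset.sum_neg_distrib, neg_add]
    ring
  obtain ⟨lam₀, hlam₀, _⟩ := hkkt y₀ hy₀
  have hFne : F.Nonempty := by
    rw [hF]
    exact Finset.Nonempty.image ⟨lam₀, hfin.mem_toFinset.2 hlam₀⟩ _
  refine ⟨F, hFne, ?_⟩
  intro y hy
  obtain ⟨⟨x₀, hx₀f, hx₀v⟩, hlb⟩ := hatt y hy
  apply le_antisymm
  · -- J y ≤ sup' : use the KKT multiplier for y
    obtain ⟨lam, hlamΛ, hcs⟩ := hkkt y hy
    have hmem : ((fun j => -∑ i, lam i * B i j), -(lam ⬝ᵥ b)) ∈ F := by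
      rw [hF]
      exact Finset.mem_image_of_mem _ (hfin.mem_toFinset.2 hlamΛ)
    refine le_trans ?_ (Finset.le_sup' _ hmem)
    rw [hvalue lam y]
    have hcs' := hcs x₀ hx₀f hx₀v
    have : ∑ i, lam i * (b i + B.mulVec y i) = ∑ i, lam i * (A.mulVec x₀ i) := by
      apply Finset.sum_congr rfl
      intro i _
      by_cases h : lam i = 0
      · simp [h]
      · rw [hcs' i h]
    rw [this, ← hweak lam hlamΛ x₀, hx₀v]
  · -- sup' ≤ J y : weak duality
    apply Finset.sup'_le
    intro q hq
    rw [hF, Finset.mem_image] at hq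
    obtain ⟨lam, hlamF, rfl⟩ := hq
    have hlamΛ : lam ∈ Λ := hfin.mem_toFinset.1 hlamF
    simp only
    rw [hvalue lam y, hx₀v, hweak lam hlamΛ x₀]
    rw [neg_le_neg_iff]
    apply Finset.sum_le_sum
    intro i _
    exact mul_le_mul_of_nonneg_left (hx₀f i) (hlamΛ.1 i)
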